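/- Scale-mixture representation of the Laplace prior: for every λ > 0 and every b ∈ ℝ, ∫_{t ∈ (0, ∞)} (2πt)^{−1/2} exp(−b²/(2t)) · (λ²/2) exp(−λ² t / 2) dt = (λ/2) exp(−λ|b|). That is, if β | τ² ∼ N(0, τ²) and τ² ∼ Exp(λ²/2), then the marginal density of β is the Laplace density with rate λ. -/

import Mathlib

open Real MeasureTheory Set Filter


-- surjectivity of s ↦ α s - β / s on Ioi 0
lemma glasser_img (α β : ℝ) (hα : 0 < α) (hβ : 0 < β) :
    (fun s : ℝ => α * s - β / s) '' Ioi 0 = univ := by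
  apply eq_univ_of_forall
  intro y
  set f : ℝ → ℝ := fun s => α * s - β / s with hf
  obtain ⟨a, ha0, ha1, hfa⟩ : ∃ a : ℝ, 0 < a ∧ a ≤ 1 ∧ f a ≤ y := by
    refine ⟨min 1 (β / (1 + |y| + α)), ?_, min_le_left _ _, ?_⟩
    · positivity
    · have h1 : 0 < β / (1 + |y| + α) := by positivity
      have h2 : β / min 1 (β / (1 + |y| + α)) ≥ 1 + |y| + α := by
        rw [ge_iff_le, le_div_iff₀ (by positivity)]
        calc (1 + |y| + α) * min 1 (β / (1 + |y| + α))
            ≤ (1 + |y| + α) * (β / (1 + |y| + α)) := by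
              apply mul_le_mul_of_nonneg_left (min_le_right _ _) (by positivity)
          _ = β := by field_simp
      have h3 : α * min 1 (β / (1 + |y| + α)) ≤ α := by
        nlinarith [min_le_left 1 (β / (1 + |y| + α)), lt_min one_pos h1]
      have := neg_abs_le y
      simp only [hf]
      nlinarith
  obtain ⟨c, hc1, hfc⟩ : ∃ c : ℝ, 1 ≤ c ∧ y ≤ f c := by
    refine ⟨max 1 ((|y| + β) / α), le_max_left _ _, ?_⟩
    have h1 : α * max 1 ((|y| + β) / α) ≥ |y| + β := by
      calc α * max 1 ((|y| + β) / α) ≥ α * ((|y| + β) / α) :=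
            mul_le_mul_of_nonneg_left (le_max_right _ _) hα.le
        _ = |y| + β := by field_simp
    have h2 : β / max 1 ((|y| + β) / α) ≤ β := by
      rw [div_le_iff₀ (by positivity)]
      nlinarith [le_max_left 1 ((|y| + β) / α)]
    have := le_abs_self y
    simp only [hf]
    nlinarith
  have hcont : ContinuousOn f (Icc a c) := by
    apply ContinuousOn.sub (by fun_prop)
    apply ContinuousOn.div continuousOn_const continuousOn_id
    intro x hx; exact ne_of_gt (lt_of_lt_of_le ha0 hx.1)
  have hac : a ≤ c := ha1.trans hc1
  obtain ⟨x, hx, hfx⟩ := intermediate_value_Icc hac hcont ⟨hfa, hfc⟩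
  exact ⟨x, lt_of_lt_of_le ha0 hx.1, hfx⟩



lemma glasser (α β : ℝ) (hα : 0 < α) (hβ : 0 < β) :
    ∫ s in Ioi (0:ℝ), Real.exp (-(α * s - β / s)^2) = Real.sqrt π / (2 * α) := by
  have hα' : α ≠ 0 := hα.ne'
  have hβ' : β ≠ 0 := hβ.ne'
  set E : ℝ → ℝ := fun s => Real.exp (-(α * s - β / s)^2) with hE
  have hEcont : ContinuousOn E (Ioi 0) := by
    apply Real.continuous_exp.comp_continuousOn
    apply ContinuousOn.neg
    apply ContinuousOn.pow
    apply ContinuousOn.sub (by fun_prop)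
    exact ContinuousOn.div continuousOn_const continuousOn_id (fun x hx => ne_of_gt hx)
  have hEint : IntegrableOn E (Ioi 0) := by
    apply Integrable.mono' ((integrable_exp_neg_mul_sq (by positivity : (0:ℝ) < α^2)).integrableOn.const_mul (Real.exp (2 * α * β)))
    · exact hEcont.aestronglyMeasurable measurableSet_Ioi
    · filter_upwards [ae_restrict_mem measurableSet_Ioi] with s hs
      have hs0 : (0:ℝ) < s := hs
      rw [Real.norm_eq_abs, abs_of_pos (Real.exp_pos _), ← Real.exp_add]
      apply Real.exp_le_exp.mpr
      have h2 : α * s * (β / s) = α * β := by field_simp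
      nlinarith [sq_nonneg (β / s)]
  have hderivR : ∀ x ∈ Ioi (0:ℝ), HasDerivWithinAt (fun x : ℝ => β / (α * x))
      (-(β / (α * x^2))) (Ioi 0) x := by
    intro x hx
    have hx0 : (0:ℝ) < x := hx
    have h : HasDerivAt (fun x : ℝ => β/α * x⁻¹) (β/α * (-(x^2)⁻¹)) x :=
      (hasDerivAt_inv hx0.ne').const_mul _
    have heqf : (fun x : ℝ => β / (α * x)) = (fun x : ℝ => β/α * x⁻¹) := by
      funext z; rw [div_mul_eq_div_div, div_eq_mul_inv (β/α)]
    have heqd : -(β / (α * x^2)) = β/α * (-(x^2)⁻¹) := by field_simp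
    rw [heqf, heqd]; exact h.hasDerivWithinAt
  have hinjR : InjOn (fun x : ℝ => β / (α * x)) (Ioi 0) := by
    intro x hx y hy h
    have hx0 : (0:ℝ) < x := hx
    have hy0 : (0:ℝ) < y := hy
    field_simp at h
    rcases h with (h | h) | h
    rfl
  have himgR : (fun x : ℝ => β / (α * x)) '' Ioi 0 = Ioi 0 := by
    ext y; constructor
    · rintro ⟨x, hx, rfl⟩
      have hx' : (0:ℝ) < x := hx
      exact mem_Ioi.mpr (by positivity)
    · intro hy
      have hy' : (0:ℝ) < y := hy
      exact ⟨β / (α * y), mem_Ioi.mpr (by positivity), by field_simp⟩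
  have heqR : ∀ x ∈ Ioi (0:ℝ),
      |(-(β / (α * x^2)))| • E (β / (α * x)) = (β / (α * x^2)) * E x := by
    intro x hx
    have hx0 : (0:ℝ) < x := hx
    rw [smul_eq_mul, abs_neg, abs_of_pos (by positivity)]
    congr 1
    simp only [hE]
    congr 1
    have : α * (β / (α * x)) - β / (β / (α * x)) = -(α * x - β / x) := by
      field_simp; ring
    rw [this, neg_sq]
  -- reciprocal substitution x ↦ β / (α x)
  have hrec : ∫ s in Ioi (0:ℝ), E s = ∫ s in Ioi (0:ℝ), (β / (α * s^2)) * E s := by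
    have himg : (fun x : ℝ => β / (α * x)) '' Ioi 0 = Ioi 0 := by
      ext y; constructor
      · rintro ⟨x, hx, rfl⟩
        have hx' : (0:ℝ) < x := hx
        exact mem_Ioi.mpr (by positivity)
      · intro hy
        have hy' : (0:ℝ) < y := hy
        exact ⟨β / (α * y), mem_Ioi.mpr (by positivity), by field_simp⟩
    have hderiv : ∀ x ∈ Ioi (0:ℝ), HasDerivWithinAt (fun x : ℝ => β / (α * x))
        (-(β / (α * x^2))) (Ioi 0) x := by
      intro x hx
      have hx0 : (0:ℝ) < x := hx
      have h : HasDerivAt (fun x : ℝ => β/α * x⁻¹) (β/α * (-(x^2)⁻¹)) x :=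
        (hasDerivAt_inv hx0.ne').const_mul _
      have heqf : (fun x : ℝ => β / (α * x)) = (fun x : ℝ => β/α * x⁻¹) := by
        funext z; rw [div_mul_eq_div_div, div_eq_mul_inv (β/α)]
      have heqd : -(β / (α * x^2)) = β/α * (-(x^2)⁻¹) := by field_simp
      rw [heqf, heqd]; exact h.hasDerivWithinAt
    have hinj : InjOn (fun x : ℝ => β / (α * x)) (Ioi 0) := by
      intro x hx y hy h
      have hx0 : (0:ℝ) < x := hx
      have hy0 : (0:ℝ) < y := hy
      field_simp at h
      rcases h with (h | h) | h
      rfl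
    calc ∫ s in Ioi (0:ℝ), E s = ∫ s in (fun x : ℝ => β / (α * x)) '' Ioi 0, E s := by rw [himg]
      _ = ∫ x in Ioi (0:ℝ), |(-(β / (α * x^2)))| • E (β / (α * x)) :=
          integral_image_eq_integral_abs_deriv_smul measurableSet_Ioi hderiv hinj E
      _ = ∫ x in Ioi (0:ℝ), (β / (α * x^2)) * E x := by
          apply setIntegral_congr_fun measurableSet_Ioi
          intro x hx
          have hx0 : (0:ℝ) < x := hx
          dsimp only
          rw [smul_eq_mul, abs_neg, abs_of_pos (by positivity)]
          congr 1
          simp only [hE]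
          have : α * (β / (α * x)) - β / (β / (α * x)) = -(α * x - β / x) := by
            field_simp; ring
          rw [this, neg_sq]
  -- integrability of second integrand
  have hEint2 : IntegrableOn (fun x : ℝ => (β / (α * x^2)) * E x) (Ioi 0) := by
    have := (integrableOn_image_iff_integrableOn_abs_deriv_smul
      measurableSet_Ioi hderivR hinjR E).mp (by rwa [himgR])
    exact this.congr_fun heqR measurableSet_Ioi
  -- main substitution v = α s - β / s
  have hmono : StrictMonoOn (fun s : ℝ => α * s - β / s) (Ioi 0) := by
    intro x hx y hy hxy
    have hx0 : (0:ℝ) < x := hx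
    have hy0 : (0:ℝ) < y := hy
    have hd : β / y < β / x := div_lt_div_of_pos_left hβ hx0 hxy
    dsimp only
    nlinarith
  have hderivM : ∀ x ∈ Ioi (0:ℝ), HasDerivWithinAt (fun s : ℝ => α * s - β / s)
      (α + β / x^2) (Ioi 0) x := by
    intro x hx
    have hx0 : (0:ℝ) < x := hx
    have h : HasDerivAt (fun s : ℝ => α * s - β * s⁻¹) (α * 1 - β * (-(x^2)⁻¹)) x :=
      ((hasDerivAt_id x).const_mul α).sub ((hasDerivAt_inv hx0.ne').const_mul β)
    have heqf : (fun s : ℝ => α * s - β / s) = (fun s : ℝ => α * s - β * s⁻¹) := by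
      funext z; rw [div_eq_mul_inv]
    have heqd : α + β / x^2 = α * 1 - β * (-(x^2)⁻¹) := by field_simp; ring
    rw [heqf, heqd]; exact h.hasDerivWithinAt
  have hmain : ∫ s in Ioi (0:ℝ), (α + β / s^2) * E s = Real.sqrt π := by
    have h1 : ∫ v : ℝ, Real.exp (-v^2) = Real.sqrt π := by
      simpa using integral_gaussian 1
    have h2 : ∫ v in (fun s : ℝ => α * s - β / s) '' Ioi 0, Real.exp (-v^2)
        = ∫ x in Ioi (0:ℝ), |α + β / x^2| • Real.exp (-(α * x - β / x)^2) :=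
      integral_image_eq_integral_abs_deriv_smul measurableSet_Ioi hderivM hmono.injOn _
    rw [glasser_img α β hα hβ, Measure.restrict_univ, h1] at h2
    rw [h2]
    apply setIntegral_congr_fun measurableSet_Ioi
    intro x hx
    have hx0 : (0:ℝ) < x := hx
    dsimp only
    rw [smul_eq_mul, abs_of_pos (by positivity)]
  -- combine
  have hsplit : ∫ s in Ioi (0:ℝ), (α + β / s^2) * E s = 2 * α * ∫ s in Ioi (0:ℝ), E s := by
    have heq : ∀ s ∈ Ioi (0:ℝ), (α + β / s^2) * E s
        = α * E s + α * ((β / (α * s^2)) * E s) := by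
      intro s hs
      have hs0 : (0:ℝ) < s := hs
      field_simp
    rw [setIntegral_congr_fun measurableSet_Ioi heq,
      integral_add (hEint.const_mul α) (hEint2.const_mul α),
      integral_const_mul, integral_const_mul, ← hrec]
    ring
  rw [eq_div_iff (by positivity), mul_comm]
  rw [← hsplit, hmain]



/-- Scale-mixture representation of the Laplace prior: if `β | τ² ∼ N(0, τ²)`
and `τ² ∼ Exp(λ²/2)`, then the marginal density of `β` is the Laplace density
with rate `λ`:
`∫_{0}^{∞} (2πt)^{-1/2} exp(-b²/(2t)) (λ²/2) exp(-λ²t/2) dt = (λ/2) exp(-λ|b|)`. -/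
theorem laplace_scale_mixture (lam b : ℝ) (hlam : 0 < lam) :
    ∫ t in Set.Ioi (0 : ℝ),
        (Real.sqrt (2 * Real.pi * t))⁻¹ * Real.exp (-b ^ 2 / (2 * t))
          * (lam ^ 2 / 2 * Real.exp (-lam ^ 2 * t / 2))
      = lam / 2 * Real.exp (-lam * |b|) := by
  set g : ℝ → ℝ := fun t => (Real.sqrt (2 * π * t))⁻¹ * Real.exp (-b ^ 2 / (2 * t))
      * (lam ^ 2 / 2 * Real.exp (-lam ^ 2 * t / 2)) with hg
  have hsqrt2π : Real.sqrt (2 * π) ≠ 0 := by positivity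
  -- substitution t = s^2
  have himg : (fun s : ℝ => s^2) '' Ioi 0 = Ioi 0 := by
    ext y; constructor
    · rintro ⟨x, hx, rfl⟩
      have hx0 : (0:ℝ) < x := hx
      exact mem_Ioi.mpr (by positivity)
    · intro hy
      have hy0 : (0:ℝ) < y := hy
      exact ⟨Real.sqrt y, mem_Ioi.mpr (Real.sqrt_pos.mpr hy0), Real.sq_sqrt hy0.le⟩
  have hderiv : ∀ x ∈ Ioi (0:ℝ), HasDerivWithinAt (fun s : ℝ => s^2) (2*x) (Ioi 0) x := by
    intro x hx
    have := (hasDerivAt_pow 2 x).hasDerivWithinAt (s := Ioi 0)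
    simpa using this
  have hinj : InjOn (fun s : ℝ => s^2) (Ioi 0) := by
    intro x hx y hy h
    have hx0 : (0:ℝ) < x := hx
    have hy0 : (0:ℝ) < y := hy
    dsimp at h
    nlinarith
  have hsub : (∫ t in Ioi (0:ℝ), g t) = ∫ s in Ioi (0:ℝ), |2*s| • g (s^2) := by
    conv_lhs => rw [← himg]
    exact integral_image_eq_integral_abs_deriv_smul measurableSet_Ioi hderiv hinj g
  -- simplify the transformed integrand
  have hsimp : ∀ s ∈ Ioi (0:ℝ), |2*s| • g (s^2)
      = lam^2 / Real.sqrt (2*π) * Real.exp (-b^2/(2*s^2) + -lam^2*s^2/2) := by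
    intro s hs
    have hs0 : (0:ℝ) < s := hs
    have h1 : Real.sqrt (2*π*s^2) = Real.sqrt (2*π) * s := by
      rw [Real.sqrt_mul (by positivity), Real.sqrt_sq hs0.le]
    rw [smul_eq_mul, abs_of_pos (by positivity), hg]
    dsimp only
    rw [h1, Real.exp_add]
    field_simp
  rw [hsub, setIntegral_congr_fun measurableSet_Ioi hsimp]
  rcases eq_or_ne b 0 with hb | hb
  · -- b = 0
    subst hb
    have : ∀ s : ℝ, -(0:ℝ)^2/(2*s^2) + -lam^2*s^2/2 = -(lam^2/2) * s^2 := by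
      intro s; ring
    simp_rw [this, integral_const_mul, integral_gaussian_Ioi]
    rw [abs_zero, mul_zero, Real.exp_zero, mul_one]
    have hval : Real.sqrt (π * 2 / lam^2) = Real.sqrt (2*π) / lam := by
      rw [show π*2/lam^2 = 2*π/lam^2 by ring, Real.sqrt_div (by positivity),
        Real.sqrt_sq hlam.le]
    rw [div_div_eq_mul_div, hval]
    field_simp
  · -- b ≠ 0
    have hb0 : 0 < |b| := abs_pos.mpr hb
    set α := lam / Real.sqrt 2 with hα
    set β := |b| / Real.sqrt 2 with hβ
    have hs2 : (Real.sqrt 2)^2 = 2 := Real.sq_sqrt (by norm_num)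
    have hαpos : 0 < α := by positivity
    have hβpos : 0 < β := by positivity
    have hαs : α^2 = lam^2/2 := by rw [hα, div_pow, hs2]
    have hβs : β^2 = b^2/2 := by rw [hβ, div_pow, hs2, sq_abs]
    have hαβ : 2*(α*β) = lam*|b| := by
      rw [hα, hβ]
      field_simp
      exact hs2.symm
    have hexp : ∀ s ∈ Ioi (0:ℝ), lam^2 / Real.sqrt (2*π) * Real.exp (-b^2/(2*s^2) + -lam^2*s^2/2)
        = (lam^2 / Real.sqrt (2*π) * Real.exp (-lam*|b|)) * Real.exp (-(α*s - β/s)^2) := by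
      intro s hs
      have hs0 : (0:ℝ) < s := hs
      rw [mul_assoc, ← Real.exp_add]
      congr 2
      have h2 : (α*s - β/s)^2 = α^2*s^2 - 2*(α*β) + β^2/s^2 := by
        field_simp; ring
      rw [h2, hαs, hβs, hαβ]
      field_simp
      ring
    rw [setIntegral_congr_fun measurableSet_Ioi hexp, integral_const_mul,
      glasser α β hαpos hβpos]
    have hsplit : Real.sqrt (2*π) = Real.sqrt 2 * Real.sqrt π := Real.sqrt_mul (by norm_num) π
    rw [hα, hsplit]
    have hπ : Real.sqrt π ≠ 0 := by positivity
    have h2 : Real.sqrt 2 ≠ 0 := by positivity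
    field_simp
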